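/- Let σ>0 and b>0 satisfy σ² ≤ 2b. Then the function y ↦ y^{−2b/σ²} · exp(2(y−1)/σ²) is not integrable on (0,1]; equivalently, lim_{x → 0+} ∫ₓ¹ y^{−2b/σ²} exp(2(y−1)/σ²) dy = +∞. In terms of the scale function V(x) = ∫₁ˣ y^{−2b/σ²} exp(2(y−1)/σ²) dy defined for 0 < x ≤ 1, this says lim_{x→0+} V(x) = −∞. -/

import Mathlib

open MeasureTheory Filter

/-- For `σ² ≤ 2b`, the scale-function integrand
`y ↦ y^{−2b/σ²} exp(2(y−1)/σ²)` of the CIR diffusion is not integrable on `(0,1]`;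
equivalently `∫ₓ¹ → +∞` as `x → 0+`, i.e. the scale function
`V(x) = ∫₁ˣ y^{−2b/σ²} exp(2(y−1)/σ²) dy` tends to `−∞` as `x → 0+`. -/
theorem cir_scale_function_diverges_at_zero (b σ : ℝ)
    (hb : 0 < b) (hσ : 0 < σ) (hσ2 : σ ^ 2 ≤ 2 * b) :
    ¬ IntegrableOn (fun y : ℝ => y ^ (-(2 * b / σ ^ 2)) * Real.exp (2 * (y - 1) / σ ^ 2))
        (Set.Ioc 0 1) ∧
    Tendsto (fun x : ℝ => ∫ y in x..1, y ^ (-(2 * b / σ ^ 2)) * Real.exp (2 * (y - 1) / σ ^ 2))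
      (nhdsWithin 0 (Set.Ioi 0)) atTop ∧
    Tendsto (fun x : ℝ => ∫ y in (1 : ℝ)..x, y ^ (-(2 * b / σ ^ 2)) * Real.exp (2 * (y - 1) / σ ^ 2))
      (nhdsWithin 0 (Set.Ioi 0)) atBot := by
  have hσ2pos : (0:ℝ) < σ ^ 2 := by positivity
  set p : ℝ := -(2 * b / σ ^ 2) with hp
  set f : ℝ → ℝ := fun y => y ^ p * Real.exp (2 * (y - 1) / σ ^ 2) with hf
  have hple : p ≤ -1 := by
    rw [hp, neg_le_neg_iff]
    rw [le_div_iff₀ hσ2pos]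
    linarith
  set c : ℝ := Real.exp (-2 / σ ^ 2) with hc
  have hcpos : 0 < c := Real.exp_pos _
  -- pointwise bound on Ioc 0 1
  have hbound : ∀ y ∈ Set.Ioc (0:ℝ) 1, c * y⁻¹ ≤ f y := by
    intro y hy
    have h1 : y⁻¹ ≤ y ^ p := by
      have := Real.rpow_le_rpow_of_exponent_ge hy.1 hy.2 hple
      rwa [Real.rpow_neg_one] at this
    have h2 : c ≤ Real.exp (2 * (y - 1) / σ ^ 2) := by
      apply Real.exp_le_exp.2
      apply div_le_div_of_nonneg_right (by linarith [hy.1]) hσ2pos.le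
    calc c * y⁻¹ = y⁻¹ * c := mul_comm _ _
      _ ≤ y ^ p * Real.exp (2 * (y - 1) / σ ^ 2) :=
        mul_le_mul h1 h2 hcpos.le (Real.rpow_nonneg (le_of_lt hy.1) p)
  -- continuity of f on positive reals
  have hfc : ContinuousOn f (Set.Ioi (0:ℝ)) := by
    apply ContinuousOn.mul
    · exact fun y hy => (Real.continuousAt_rpow_const y p (Or.inl (ne_of_gt hy))).continuousWithinAt
    · exact (Real.continuous_exp.comp (by continuity)).continuousOn
  -- Part 1
  have part1 : ¬ IntegrableOn f (Set.Ioc 0 1) := by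
    intro h
    have hinv : IntegrableOn (fun y : ℝ => c * y⁻¹) (Set.Ioc (0:ℝ) 1) := by
      refine h.mono' ?_ ?_
      · exact (measurable_const.mul (measurable_inv)).aestronglyMeasurable
      · filter_upwards [ae_restrict_mem measurableSet_Ioc] with y hy
        rw [Real.norm_eq_abs, abs_of_nonneg (mul_nonneg hcpos.le (inv_nonneg.2 hy.1.le))]
        exact hbound y hy
    have hinv2 : IntegrableOn (fun y : ℝ => y⁻¹) (Set.Ioc (0:ℝ) 1) := by
      have := hinv.const_mul c⁻¹
      simpa [IntegrableOn, ← mul_assoc, inv_mul_cancel₀ (ne_of_gt hcpos)] using this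
    have : IntervalIntegrable (fun y : ℝ => y⁻¹) volume 0 1 :=
      (intervalIntegrable_iff_integrableOn_Ioc_of_le zero_le_one).2 hinv2
    rw [intervalIntegrable_inv_iff] at this
    rcases this with h01 | h0
    · norm_num at h01
    · exact h0 (by simp [Set.uIcc_of_le (zero_le_one (α := ℝ))])
  -- lower bound on integral
  have key : ∀ x : ℝ, x ∈ Set.Ioo (0:ℝ) 1 → c * Real.log (1 / x) ≤ ∫ y in x..1, f y := by
    intro x hx
    have hsub : Set.uIcc x 1 ⊆ Set.Ioi (0:ℝ) := by
      rw [Set.uIcc_of_le hx.2.le]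
      intro y hy; exact lt_of_lt_of_le hx.1 hy.1
    have hif : IntervalIntegrable f volume x 1 := (hfc.mono hsub).intervalIntegrable
    have hig : IntervalIntegrable (fun y : ℝ => c * y⁻¹) volume x 1 := by
      apply ContinuousOn.intervalIntegrable
      exact continuousOn_const.mul ((continuousOn_inv₀).mono (fun y hy => ne_of_gt (hsub hy)))
    have hmono := intervalIntegral.integral_mono_on hx.2.le hig hif (fun y hy =>
      hbound y ⟨lt_of_lt_of_le hx.1 hy.1, hy.2⟩)
    calc c * Real.log (1 / x) = ∫ y in x..1, c * y⁻¹ := by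
          rw [intervalIntegral.integral_const_mul, integral_inv_of_pos hx.1 one_pos]
      _ ≤ ∫ y in x..1, f y := hmono
  -- Part 2
  have hlog : Tendsto (fun x : ℝ => c * Real.log (1 / x)) (nhdsWithin 0 (Set.Ioi 0)) atTop := by
    apply Tendsto.const_mul_atTop hcpos
    have : Tendsto Real.log (nhdsWithin 0 (Set.Ioi 0)) atBot :=
      Real.tendsto_log_nhdsGT_zero
    simp only [one_div, Real.log_inv]
    exact tendsto_neg_atBot_atTop.comp this
  have part2 : Tendsto (fun x : ℝ => ∫ y in x..1, f y) (nhdsWithin 0 (Set.Ioi 0)) atTop := by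
    apply tendsto_atTop_mono' _ _ hlog
    filter_upwards [Ioo_mem_nhdsGT_of_mem ⟨le_refl (0:ℝ), one_pos⟩] with x hx
    exact key x hx
  refine ⟨part1, part2, ?_⟩
  have : (fun x : ℝ => ∫ y in (1:ℝ)..x, f y) = fun x => -(∫ y in x..1, f y) := by
    ext x; rw [intervalIntegral.integral_symm]
  rw [this]
  exact tendsto_neg_atTop_atBot.comp part2
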